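/- Any formal power series solution u ∈ ℂ[[t]]^n of the system t·u'(t) + A(t)·u(t) = b(t), where A is an n×n matrix of functions holomorphic at 0 and b is an n-vector of functions holomorphic at 0, has positive radius of convergence (i.e., is holomorphic at 0). -/

import Mathlib

set_option maxHeartbeats 1000000 in
/-- Lemma on regular differential equations: any formal power series solution `u`
(vector-valued, coefficients `u k : Fin n → ℂ`) of `t·u'(t) + A(t)·u(t) = b(t)`,
where `A` and `b` are holomorphic at `0` (their coefficient series have positive
radius of convergence), is itself holomorphic at `0` (has positive radius of
convergence). The equation is understood coefficientwise:
the coefficient of `t^k` in `t·u'` is `k • u k`, and in `A·u` it is the convolution. -/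
theorem stmt_2 (n : ℕ) (A : ℕ → Matrix (Fin n) (Fin n) ℂ) (bv u : ℕ → Fin n → ℂ)
    (hA : ∃ r : ℝ, 0 < r ∧ ∀ i j, Summable fun k => ‖A k i j‖ * r ^ k)
    (hb : ∃ r : ℝ, 0 < r ∧ ∀ i, Summable fun k => ‖bv k i‖ * r ^ k)
    (heq : ∀ k : ℕ, (k : ℂ) • u k +
      ∑ p ∈ Finset.HasAntidiagonal.antidiagonal k, (A p.1).mulVec (u p.2) = bv k) :
    ∃ r : ℝ, 0 < r ∧ ∀ i, Summable fun k => ‖u k i‖ * r ^ k := by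
  obtain ⟨rA, hrA, hAs⟩ := hA
  obtain ⟨rb, hrb, hbs⟩ := hb
  set r : ℝ := min rA rb with hrdef
  have hr : 0 < r := lt_min hrA hrb
  set a : ℕ → ℝ := fun p => ∑ i, ∑ j, ‖A p i j‖ with hadef
  set β : ℕ → ℝ := fun k => ∑ i, ‖bv k i‖ with hβdef
  set w : ℕ → ℝ := fun k => ∑ i, ‖u k i‖ with hwdef
  have ha0 : ∀ p, 0 ≤ a p := fun p =>
    Finset.sum_nonneg fun i _ => Finset.sum_nonneg fun j _ => norm_nonneg _
  have hβ0 : ∀ p, 0 ≤ β p := fun p => Finset.sum_nonneg fun i _ => norm_nonneg _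
  have hw0 : ∀ p, 0 ≤ w p := fun p => Finset.sum_nonneg fun i _ => norm_nonneg _
  set C : ℝ := (∑ i, ∑ j, ∑' k, ‖A k i j‖ * rA ^ k)
      + (∑ i, ∑' k, ‖bv k i‖ * rb ^ k) + 1 with hCdef
  have hCA0 : (0:ℝ) ≤ ∑ i, ∑ j, ∑' k, ‖A k i j‖ * rA ^ k :=
    Finset.sum_nonneg fun i _ => Finset.sum_nonneg fun j _ =>
      tsum_nonneg fun k => mul_nonneg (norm_nonneg _) (pow_nonneg hrA.le _)
  have hCb0 : (0:ℝ) ≤ ∑ i, ∑' k, ‖bv k i‖ * rb ^ k :=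
    Finset.sum_nonneg fun i _ =>
      tsum_nonneg fun k => mul_nonneg (norm_nonneg _) (pow_nonneg hrb.le _)
  have hC1 : (1:ℝ) ≤ C := by rw [hCdef]; linarith
  have haC : ∀ p, a p * r ^ p ≤ C := by
    intro p
    have h1 : a p * r ^ p = ∑ i, ∑ j, ‖A p i j‖ * r ^ p := by
      rw [hadef]; simp [Finset.sum_mul]
    rw [h1]
    have h2 : ∑ i, ∑ j, ‖A p i j‖ * r ^ p
        ≤ ∑ i, ∑ j, ∑' k, ‖A k i j‖ * rA ^ k := by
      refine Finset.sum_le_sum fun i _ => Finset.sum_le_sum fun j _ => ?_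
      refine le_trans ?_ (Summable.le_tsum (hAs i j) p
        (fun k _ => mul_nonneg (norm_nonneg _) (pow_nonneg hrA.le _)))
      exact mul_le_mul_of_nonneg_left
        (pow_le_pow_left₀ hr.le (min_le_left _ _) p) (norm_nonneg _)
    rw [hCdef]; linarith
  have hβC : ∀ p, β p * r ^ p ≤ C := by
    intro p
    have h1 : β p * r ^ p = ∑ i, ‖bv p i‖ * r ^ p := by
      rw [hβdef]; simp [Finset.sum_mul]
    rw [h1]
    have h2 : ∑ i, ‖bv p i‖ * r ^ p ≤ ∑ i, ∑' k, ‖bv k i‖ * rb ^ k := by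
      refine Finset.sum_le_sum fun i _ => ?_
      refine le_trans ?_ (Summable.le_tsum (hbs i) p
        (fun k _ => mul_nonneg (norm_nonneg _) (pow_nonneg hrb.le _)))
      exact mul_le_mul_of_nonneg_left
        (pow_le_pow_left₀ hr.le (min_le_right _ _) p) (norm_nonneg _)
    rw [hCdef]; linarith
  -- key coefficientwise inequality
  have hbound : ∀ (k : ℕ) (i : Fin n), (k:ℝ) * ‖u k i‖
      ≤ ‖bv k i‖ + ∑ p ∈ Finset.HasAntidiagonal.antidiagonal k, ∑ j, ‖A p.1 i j‖ * w p.2 := by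
    intro k i
    have h := congrFun (heq k) i
    simp only [Pi.add_apply, Pi.smul_apply, Finset.sum_apply, smul_eq_mul] at h
    have h2 : (k:ℂ) * u k i
        = bv k i - ∑ p ∈ Finset.HasAntidiagonal.antidiagonal k, ((A p.1).mulVec (u p.2)) i := by
      rw [← h]; ring
    have h3 : (k:ℝ) * ‖u k i‖ = ‖(k:ℂ) * u k i‖ := by
      rw [norm_mul, Complex.norm_natCast]
    rw [h3, h2]
    refine le_trans (norm_sub_le _ _) (add_le_add le_rfl ?_)
    refine le_trans (norm_sum_le _ _) (Finset.sum_le_sum fun p _ => ?_)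
    have h4 : ((A p.1).mulVec (u p.2)) i = ∑ j, A p.1 i j * u p.2 j := by
      simp [Matrix.mulVec, dotProduct]
    rw [h4]
    refine le_trans (norm_sum_le _ _) (Finset.sum_le_sum fun j _ => ?_)
    rw [norm_mul]
    refine mul_le_mul_of_nonneg_left ?_ (norm_nonneg _)
    exact Finset.single_le_sum (f := fun j => ‖u p.2 j‖)
      (fun _ _ => norm_nonneg _) (Finset.mem_univ j)
  have hkey : ∀ (k : ℕ), (k:ℝ) * w k
      ≤ β k + ∑ p ∈ Finset.HasAntidiagonal.antidiagonal k, a p.1 * w p.2 := by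
    intro k
    have h1 : (k:ℝ) * w k = ∑ i, (k:ℝ) * ‖u k i‖ := by
      rw [hwdef]; rw [Finset.mul_sum]
    rw [h1]
    calc ∑ i, (k:ℝ) * ‖u k i‖
        ≤ ∑ i, (‖bv k i‖ + ∑ p ∈ Finset.HasAntidiagonal.antidiagonal k, ∑ j, ‖A p.1 i j‖ * w p.2) :=
          Finset.sum_le_sum fun i _ => hbound k i
      _ = β k + ∑ i, ∑ p ∈ Finset.HasAntidiagonal.antidiagonal k, ∑ j, ‖A p.1 i j‖ * w p.2 := by
          rw [Finset.sum_add_distrib]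
      _ = β k + ∑ p ∈ Finset.HasAntidiagonal.antidiagonal k, a p.1 * w p.2 := by
          congr 1
          rw [Finset.sum_comm]
          refine Finset.sum_congr rfl fun p _ => ?_
          rw [hadef]; simp [Finset.sum_mul]
  set ρ : ℝ := r / 2 with hρdef
  have hρ : 0 < ρ := by rw [hρdef]; linarith
  have hρr : ρ ≤ r := by rw [hρdef]; linarith
  obtain ⟨K, hK⟩ := exists_nat_gt (2 * a 0 + 4 * C + 4)
  set M : ℝ := (∑ k ∈ Finset.range K, w k * ρ ^ k) + 1 with hMdef
  have hM1 : (1:ℝ) ≤ M := by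
    rw [hMdef]
    have : (0:ℝ) ≤ ∑ k ∈ Finset.range K, w k * ρ ^ k :=
      Finset.sum_nonneg fun m _ => mul_nonneg (hw0 m) (pow_nonneg hρ.le m)
    linarith
  have hMb : ∀ k, k < K → w k * ρ ^ k ≤ M := by
    intro k hk
    have h1 : w k * ρ ^ k ≤ ∑ m ∈ Finset.range K, w m * ρ ^ m :=
      Finset.single_le_sum (f := fun m => w m * ρ ^ m)
        (fun m _ => mul_nonneg (hw0 m) (pow_nonneg hρ.le m)) (Finset.mem_range.2 hk)
    rw [hMdef]; linarith
  have hgeo : ∀ k : ℕ, ∑ q ∈ Finset.range k, (1/2:ℝ) ^ (q+1) ≤ 1 := by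
    have heqs : ∀ k : ℕ, ∑ q ∈ Finset.range k, (1/2:ℝ) ^ (q+1) = 1 - (1/2:ℝ) ^ k := by
      intro k
      induction k with
      | zero => simp
      | succ m ih => rw [Finset.sum_range_succ, ih, pow_succ]; ring
    intro k
    rw [heqs k]
    have : (0:ℝ) ≤ (1/2:ℝ) ^ k := by positivity
    linarith
  have hmain : ∀ k, w k * ρ ^ k ≤ M := by
    intro k
    induction k using Nat.strong_induction_on with
    | _ k IH =>
    by_cases hkK : k < K
    · exact hMb k hkK
    push_neg at hkK
    have hkR : 2 * a 0 + 4 * C + 4 < (k:ℝ) :=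
      lt_of_lt_of_le hK (Nat.cast_le.2 hkK)
    have h1 := hkey k
    rw [Finset.Nat.sum_antidiagonal_eq_sum_range_succ_mk,
      Finset.sum_range_succ'] at h1
    simp only [Nat.sub_zero] at h1
    set S : ℝ := ∑ q ∈ Finset.range k, a (q+1) * w (k - (q+1)) with hSdef
    -- h1 : k * w k ≤ β k + (S + a 0 * w k)
    have h2 : ((k:ℝ) - a 0) * (w k * ρ ^ k) ≤ (β k + S) * ρ ^ k := by
      have hstep : ((k:ℝ) - a 0) * w k ≤ β k + S := by linarith
      calc ((k:ℝ) - a 0) * (w k * ρ ^ k) = (((k:ℝ) - a 0) * w k) * ρ ^ k := by ring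
        _ ≤ (β k + S) * ρ ^ k :=
          mul_le_mul_of_nonneg_right hstep (pow_nonneg hρ.le k)
    have hβk : β k * ρ ^ k ≤ C := by
      calc β k * ρ ^ k ≤ β k * r ^ k :=
            mul_le_mul_of_nonneg_left (pow_le_pow_left₀ hρ.le hρr k) (hβ0 k)
        _ ≤ C := hβC k
    have hS : S * ρ ^ k ≤ C * M := by
      rw [hSdef, Finset.sum_mul]
      have hterm : ∀ q ∈ Finset.range k,
          a (q+1) * w (k - (q+1)) * ρ ^ k ≤ C * M * (1/2:ℝ) ^ (q+1) := by
        intro q hq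
        have hqk : q + 1 ≤ k := Finset.mem_range.1 hq
        have hsplit : ρ ^ k = ρ ^ (q+1) * ρ ^ (k - (q+1)) := by
          rw [← pow_add]; congr 1; omega
        have ha1 : a (q+1) * ρ ^ (q+1) ≤ C * (1/2:ℝ) ^ (q+1) := by
          have hρeq : ρ ^ (q+1) = r ^ (q+1) * (1/2:ℝ) ^ (q+1) := by
            rw [← mul_pow]; congr 1; rw [hρdef]; ring
          rw [hρeq, ← mul_assoc]
          exact mul_le_mul_of_nonneg_right (haC (q+1)) (by positivity)
        have hw1 : w (k - (q+1)) * ρ ^ (k - (q+1)) ≤ M := IH _ (by omega)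
        calc a (q+1) * w (k - (q+1)) * ρ ^ k
            = (a (q+1) * ρ ^ (q+1)) * (w (k - (q+1)) * ρ ^ (k - (q+1))) := by
              rw [hsplit]; ring
          _ ≤ (C * (1/2:ℝ) ^ (q+1)) * M := by
              refine mul_le_mul ha1 hw1
                (mul_nonneg (hw0 _) (pow_nonneg hρ.le _))
                (mul_nonneg (by linarith) (by positivity))
          _ = C * M * (1/2:ℝ) ^ (q+1) := by ring
      calc ∑ q ∈ Finset.range k, a (q+1) * w (k - (q+1)) * ρ ^ k
          ≤ ∑ q ∈ Finset.range k, C * M * (1/2:ℝ) ^ (q+1) :=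
            Finset.sum_le_sum hterm
        _ = C * M * ∑ q ∈ Finset.range k, (1/2:ℝ) ^ (q+1) := by
            rw [Finset.mul_sum]
        _ ≤ C * M * 1 := by
            refine mul_le_mul_of_nonneg_left (hgeo k) ?_
            exact mul_nonneg (by linarith) (by linarith)
        _ = C * M := by ring
    have h3 : ((k:ℝ) - a 0) * (w k * ρ ^ k) ≤ C + C * M := by
      calc ((k:ℝ) - a 0) * (w k * ρ ^ k) ≤ (β k + S) * ρ ^ k := h2
        _ = β k * ρ ^ k + S * ρ ^ k := by ring
        _ ≤ C + C * M := add_le_add hβk hS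
    have hka : 2 * C + 2 ≤ (k:ℝ) - a 0 := by
      have := ha0 0
      linarith
    have hx0 : 0 ≤ w k * ρ ^ k := mul_nonneg (hw0 k) (pow_nonneg hρ.le k)
    nlinarith [mul_le_mul_of_nonneg_right hka hx0, hC1, hM1]
  refine ⟨ρ / 2, by positivity, fun i => ?_⟩
  have hsum : Summable fun k : ℕ => M * (1/2:ℝ) ^ k :=
    (summable_geometric_of_lt_one (by norm_num) (by norm_num)).mul_left M
  refine Summable.of_nonneg_of_le
    (fun k => mul_nonneg (norm_nonneg _) (pow_nonneg (by positivity) k))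
    (fun k => ?_) hsum
  have h1 : ‖u k i‖ ≤ w k :=
    Finset.single_le_sum (f := fun j => ‖u k j‖)
      (fun _ _ => norm_nonneg _) (Finset.mem_univ i)
  have h2 : (ρ / 2) ^ k = ρ ^ k * (1/2:ℝ) ^ k := by
    rw [← mul_pow]; congr 1; ring
  calc ‖u k i‖ * (ρ / 2) ^ k = (‖u k i‖ * ρ ^ k) * (1/2:ℝ) ^ k := by
        rw [h2]; ring
    _ ≤ (w k * ρ ^ k) * (1/2:ℝ) ^ k := by
        refine mul_le_mul_of_nonneg_right
          (mul_le_mul_of_nonneg_right h1 (pow_nonneg hρ.le k)) (by positivity)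
    _ ≤ M * (1/2:ℝ) ^ k :=
        mul_le_mul_of_nonneg_right (hmain k) (by positivity)
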